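/- arXiv:2310.13372 — 3 statements merged into one kernel-verified Lean document; each statement's English description precedes it below -/
import Mathlib

section
/- Given an adjoint triple L ⊣ F ⊣ R between categories, the functor L is fully faithful if and only if R is fully faithful. -/
open CategoryTheory

universe v₁ v₂ u₁ u₂

/-- Given an adjoint triple `L ⊣ F ⊣ R`, the functor `L` is fully faithful iff `R` is. -/
theorem stmt3 {A : Type u₁} [Category.{v₁} A] {B : Type u₂} [Category.{v₂} B]
    (L : A ⥤ B) (F : B ⥤ A) (R : A ⥤ B) (adj₁ : L ⊣ F) (adj₂ : F ⊣ R) :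
    (L.Full ∧ L.Faithful) ↔ (R.Full ∧ R.Faithful) := by
  constructor
  · rintro ⟨h1, h2⟩
    have := (Adjunction.Triple.mk adj₁ adj₂).fullyFaithfulEquiv (Functor.FullyFaithful.ofFullyFaithful L)
    exact ⟨this.full, this.faithful⟩
  · rintro ⟨h1, h2⟩
    have := (Adjunction.Triple.mk adj₁ adj₂).fullyFaithfulEquiv.symm (Functor.FullyFaithful.ofFullyFaithful R)
    exact ⟨this.full, this.faithful⟩
end

section
/- Let L ⊣ R be an adjunction between categories with R fully faithful, and let W be the class of morphisms inverted by L. Then L exhibits its codomain as the localization of its domain at W; in particular a morphism f is inverted by L if and only if for every object X in the essential image of R, precomposition with f induces a bijection of hom-sets into X. -/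
open CategoryTheory

universe v₁ v₂ u₁ u₂

/-- Let `L ⊣ R` be an adjunction with `R` fully faithful (a reflective localization), and let
`W` be the class of morphisms inverted by `L`.  Then `L` exhibits `D` as the localization of
`C` at `W`, and a morphism `f` is inverted by `L` iff precomposition with `f` is a bijection
of hom-sets into every object in the essential image of `R`. -/
theorem stmt5 {C : Type u₁} [Category.{v₁} C] {D : Type u₂} [Category.{v₂} D]
    (L : C ⥤ D) (R : D ⥤ C) (adj : L ⊣ R) [R.Full] [R.Faithful]
    (W : MorphismProperty C) (hW : ∀ ⦃A B : C⦄ (f : A ⟶ B), W f ↔ IsIso (L.map f)) :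
    L.IsLocalization W ∧
      ∀ ⦃A B : C⦄ (f : A ⟶ B), IsIso (L.map f) ↔
        ∀ X : C, R.essImage X → Function.Bijective (fun g : B ⟶ X => f ≫ g) := by
  have hWeq : W = (MorphismProperty.isomorphisms D).inverseImage L := by
    ext A B f
    exact hW f
  constructor
  · rw [hWeq]
    exact adj.isLocalization
  · intro A B f
    constructor
    · intro hf X hX
      obtain ⟨Y, ⟨e⟩⟩ := hX
      constructor
      · intro g₁ g₂ h
        dsimp at h
        have h' : L.map f ≫ (adj.homEquiv B Y).symm (g₁ ≫ e.inv) =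
            L.map f ≫ (adj.homEquiv B Y).symm (g₂ ≫ e.inv) := by
          rw [← adj.homEquiv_naturality_left_symm, ← adj.homEquiv_naturality_left_symm,
            ← Category.assoc, ← Category.assoc, h]
        rw [cancel_epi (L.map f)] at h'
        have := (adj.homEquiv B Y).symm.injective h'
        simpa using congrArg (fun k => k ≫ e.hom) this
      · intro h
        refine ⟨(adj.homEquiv B Y) (inv (L.map f) ≫ (adj.homEquiv A Y).symm (h ≫ e.inv))
            ≫ e.hom, ?_⟩
        dsimp
        rw [← Category.assoc, ← adj.homEquiv_naturality_left, ← Category.assoc,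
          IsIso.hom_inv_id, Category.id_comp, Equiv.apply_symm_apply, Category.assoc,
          e.inv_hom_id, Category.comp_id]
    · intro h
      obtain ⟨g, hg⟩ := (h (R.obj (L.obj A)) ⟨L.obj A, ⟨Iso.refl _⟩⟩).2 (adj.unit.app A)
      dsimp at hg
      have hgf : g ≫ R.map (L.map f) = adj.unit.app B := by
        apply (h (R.obj (L.obj B)) ⟨L.obj B, ⟨Iso.refl _⟩⟩).1
        dsimp
        rw [← Category.assoc, hg]
        exact (adj.unit.naturality f).symm
      refine ⟨(adj.homEquiv B (L.obj A)).symm g, ?_, ?_⟩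
      · rw [← adj.homEquiv_naturality_left_symm, hg]
        simp [Adjunction.homEquiv_counit]
      · apply (adj.homEquiv B (L.obj B)).injective
        rw [adj.homEquiv_naturality_right, Equiv.apply_symm_apply, hgf]
        simp [Adjunction.homEquiv_unit]
end

section
/- In a commutative square of right adjoints G' ∘ P = Q ∘ G where all four functors admit left adjoints F, F', P!, Q!, the induced Beck–Chevalley natural transformation P! ∘ F' → F ∘ Q! is an isomorphism if and only if the mate transformation Q ∘ G → G' ∘ P (which here is the identity) satisfies the corresponding base-change condition on representable objects, assuming all categories are presentable, the left adjoints preserve colimits, and the condition holds on a set of generators. -/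
open CategoryTheory Limits

universe v u₁ u₂ u₃ u₄

/-- The closure of a set of objects under small colimits. -/
inductive ColimClosure {A : Type u₁} [Category.{v} A] (S : Set A) : A → Prop
  | of {X : A} : X ∈ S → ColimClosure S X
  | colim {J : Type v} [SmallCategory J] (K : J ⥤ A) (c : Cocone K) (hc : IsColimit c)
      (h : ∀ j, ColimClosure S (K.obj j)) : ColimClosure S c.pt


lemma myAppIso {C : Type u₁} [Category.{v} C] {D : Type u₂} [Category.{v} D]
    {H K : C ⥤ D} [PreservesColimitsOfSize.{v, v} H] [PreservesColimitsOfSize.{v, v} K]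
    (η : H ⟶ K) {J : Type v} [SmallCategory J] (Dg : J ⥤ C) (c : Cocone Dg)
    (hc : IsColimit c) (h : ∀ j, IsIso (η.app (Dg.obj j))) : IsIso (η.app c.pt) := by
  haveI : ∀ j, IsIso ((Functor.whiskerLeft Dg η).app j) := h
  haveI : IsIso (Functor.whiskerLeft Dg η) := NatIso.isIso_of_isIso_app _
  have hH := isColimitOfPreserves H hc
  have hK := isColimitOfPreserves K hc
  have heq : η.app c.pt =
      (IsColimit.coconePointsIsoOfNatIso hH hK (asIso (Functor.whiskerLeft Dg η))).hom := by
    apply hH.hom_ext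
    intro j
    rw [IsColimit.comp_coconePointsIsoOfNatIso_hom]
    exact η.naturality (c.ι.app j)
  rw [heq]
  infer_instance

/-- In a commutative square of right adjoints `G' ∘ P ≅ Q ∘ G` in which all four functors
admit left adjoints `F`, `F'`, `P!`, `Q!`, the Beck–Chevalley transformation
`P! ∘ F' ⟶ F ∘ Q!` is an isomorphism iff it is an isomorphism on a set of objects generating
the source category under small colimits. -/
theorem stmt15 {A : Type u₁} [Category.{v} A] {A' : Type u₂} [Category.{v} A']
    {B : Type u₃} [Category.{v} B] {B' : Type u₄} [Category.{v} B']
    (F : A ⥤ A') (G : A' ⥤ A) (adjF : F ⊣ G)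
    (F' : B ⥤ B') (G' : B' ⥤ B) (adjF' : F' ⊣ G')
    (Pl : A ⥤ B) (P : B ⥤ A) (adjP : Pl ⊣ P)
    (Ql : A' ⥤ B') (Q : B' ⥤ A') (adjQ : Ql ⊣ Q)
    (e : G' ⋙ P ≅ Q ⋙ G)
    (S : Set A) (hgen : ∀ X : A, ColimClosure S X)
    (θ : Pl ⋙ F' ⟶ F ⋙ Ql)
    (hθ : ∀ X : A, θ.app X =
      (adjF'.homEquiv (Pl.obj X) (Ql.obj (F.obj X))).symm
        ((adjP.homEquiv X (G'.obj (Ql.obj (F.obj X)))).symm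
          (adjF.unit.app X ≫ G.map (adjQ.unit.app (F.obj X)) ≫
            e.inv.app (Ql.obj (F.obj X))))) :
    IsIso θ ↔ ∀ X ∈ S, IsIso (θ.app X) := by
  constructor
  · intro h X _
    infer_instance
  · intro h
    haveI := adjP.leftAdjoint_preservesColimits
    haveI := adjF'.leftAdjoint_preservesColimits
    haveI := adjF.leftAdjoint_preservesColimits
    haveI := adjQ.leftAdjoint_preservesColimits
    haveI : PreservesColimitsOfSize.{v, v} (Pl ⋙ F') := inferInstance
    haveI : PreservesColimitsOfSize.{v, v} (F ⋙ Ql) := inferInstance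
    haveI : ∀ X : A, IsIso (θ.app X) := by
      intro X
      induction hgen X with
      | of hX => exact h _ hX
      | colim K c hc hj ih => exact myAppIso θ K c hc ih
    exact NatIso.isIso_of_isIso_app θ
end
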